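/- Let c₁,…,c_n be elements of a commutative ring with identity. Then the coefficient of x₁^{n−1}⋯x_n^{n−1} y₁^{n−1}⋯y_n^{n−1} in the polynomial ∏_{1≤i<j≤n} (x_j − x_i)(y_j − y_i)(c_j x_j y_j − c_i x_i y_i) equals ∏_{1≤i<j≤n} (c_j − c_i). -/

import Mathlib

namespace aux
open MvPolynomial

lemma vandermonde_expand {S : Type*} [CommRing S] {n : ℕ} (v : Fin n → S) :
    ∏ i : Fin n, ∏ j ∈ Finset.Ioi i, (v j - v i)
      = ∑ σ : Equiv.Perm (Fin n), Equiv.Perm.sign σ • ∏ i : Fin n, v i ^ (σ i : ℕ) := by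
  rw [← Matrix.det_vandermonde, Matrix.det_apply]
  rw [← Equiv.sum_comp (Equiv.inv (Equiv.Perm (Fin n)))]
  refine Finset.sum_congr rfl fun σ _ => ?_
  simp only [Equiv.inv_apply, Equiv.Perm.sign_inv]
  congr 1
  rw [← Equiv.prod_comp σ]
  simp [Matrix.vandermonde]

lemma prod_monomial {S ι τ' : Type*} [CommSemiring S] (s : Finset ι) (f : ι → (τ' →₀ ℕ)) (a : ι → S) :
    ∏ i ∈ s, MvPolynomial.monomial (f i) (a i)
      = MvPolynomial.monomial (∑ i ∈ s, f i) (∏ i ∈ s, a i) := by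
  classical
  induction s using Finset.induction with
  | empty => simp
  | insert _ _ h ih => simp [Finset.prod_insert h, Finset.sum_insert h, ih, MvPolynomial.monomial_mul]

variable {R : Type*} [CommRing R] {n : ℕ}

lemma eval_inl (e f : Fin n → ℕ) (k : Fin n) :
    ((∑ i : Fin n, (Finsupp.single (Sum.inl i) (e i) + Finsupp.single (Sum.inr i) (f i))
        : (Fin n ⊕ Fin n) →₀ ℕ)) (Sum.inl k) = e k := by
  rw [Finsupp.finset_sum_apply]
  simp [Finsupp.single_apply, Finset.sum_ite_eq']

lemma eval_inr (e f : Fin n → ℕ) (k : Fin n) :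
    ((∑ i : Fin n, (Finsupp.single (Sum.inl i) (e i) + Finsupp.single (Sum.inr i) (f i))
        : (Fin n ⊕ Fin n) →₀ ℕ)) (Sum.inr k) = f k := by
  rw [Finsupp.finset_sum_apply]
  simp [Finsupp.single_apply, Finset.sum_ite_eq']

lemma term_eq (c : Fin n → R) (τ ρ σ : Equiv.Perm (Fin n)) :
    (∏ i : Fin n, (X (Sum.inl i) : MvPolynomial (Fin n ⊕ Fin n) R) ^ (τ i : ℕ))
      * (∏ i : Fin n, (X (Sum.inr i) : MvPolynomial (Fin n ⊕ Fin n) R) ^ (ρ i : ℕ))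
      * (∏ i : Fin n, (C (c i) * X (Sum.inl i) * X (Sum.inr i)) ^ (σ i : ℕ))
    = monomial (∑ i : Fin n, (Finsupp.single (Sum.inl i) ((τ i : ℕ) + (σ i : ℕ))
        + Finsupp.single (Sum.inr i) ((ρ i : ℕ) + (σ i : ℕ))))
        (∏ i : Fin n, c i ^ (σ i : ℕ)) := by
  have h3 : ∀ i : Fin n, (C (c i) * X (Sum.inl i) * X (Sum.inr i)
      : MvPolynomial (Fin n ⊕ Fin n) R) ^ (σ i : ℕ)
      = monomial (Finsupp.single (Sum.inl i) (σ i : ℕ) + Finsupp.single (Sum.inr i) (σ i : ℕ))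
          (c i ^ (σ i : ℕ)) := by
    intro i
    have : (C (c i) * X (Sum.inl i) * X (Sum.inr i) : MvPolynomial (Fin n ⊕ Fin n) R)
        = monomial (Finsupp.single (Sum.inl i) 1 + Finsupp.single (Sum.inr i) 1) (c i) := by
      rw [C_mul_X_eq_monomial, X, monomial_mul, mul_one]
    rw [this, monomial_pow, smul_add, Finsupp.smul_single, Finsupp.smul_single]
    simp [mul_comm]
  simp only [X_pow_eq_monomial, h3, prod_monomial, Finset.prod_const_one, monomial_mul, one_mul,
    ← Finset.sum_add_distrib]
  congr 2
  refine Finset.sum_congr rfl fun i _ => ?_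
  simp only [Finsupp.single_add]
  abel

lemma fin_add_eq_iff (a b : Fin n) : (a : ℕ) + (b : ℕ) = n - 1 ↔ a = b.rev := by
  have hb := b.isLt
  constructor
  · intro h; apply Fin.ext; rw [Fin.val_rev]; omega
  · intro h; subst h; rw [Fin.val_rev]; omega

lemma cond_iff (τ ρ σ : Equiv.Perm (Fin n)) :
    (∑ i : Fin n, (Finsupp.single (Sum.inl i) ((τ i : ℕ) + (σ i : ℕ))
        + Finsupp.single (Sum.inr i) ((ρ i : ℕ) + (σ i : ℕ))) : (Fin n ⊕ Fin n) →₀ ℕ)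
      = Finsupp.equivFunOnFinite.symm (fun _ : Fin n ⊕ Fin n => n - 1)
    ↔ τ = Fin.revPerm * σ ∧ ρ = Fin.revPerm * σ := by
  constructor
  · intro h
    constructor
    · refine Equiv.ext fun k => ?_
      have := DFunLike.congr_fun h (Sum.inl k)
      rw [eval_inl] at this
      simp only [Finsupp.coe_equivFunOnFinite_symm] at this
      simpa [Equiv.Perm.mul_apply] using (fin_add_eq_iff (τ k) (σ k)).1 this
    · refine Equiv.ext fun k => ?_
      have := DFunLike.congr_fun h (Sum.inr k)
      rw [eval_inr] at this
      simp only [Finsupp.coe_equivFunOnFinite_symm] at this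
      simpa [Equiv.Perm.mul_apply] using (fin_add_eq_iff (ρ k) (σ k)).1 this
  · rintro ⟨h1, h2⟩
    subst h1; subst h2
    apply Finsupp.ext
    intro a
    cases a with
    | inl k =>
      rw [eval_inl]
      simp only [Finsupp.coe_equivFunOnFinite_symm, Equiv.Perm.mul_apply]
      exact (fin_add_eq_iff _ _).2 rfl
    | inr k =>
      rw [eval_inr]
      simp only [Finsupp.coe_equivFunOnFinite_symm, Equiv.Perm.mul_apply]
      exact (fin_add_eq_iff _ _).2 rfl

end aux

open aux

open MvPolynomial

/-- Lemma 2.2. -/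
theorem stmt8 {R : Type*} [CommRing R] (n : ℕ) (c : Fin n → R) :
    MvPolynomial.coeff
      (Finsupp.equivFunOnFinite.symm fun _ : Fin n ⊕ Fin n => n - 1)
      (∏ i : Fin n, ∏ j ∈ Finset.Ioi i,
        ((X (Sum.inl j) - X (Sum.inl i)) * (X (Sum.inr j) - X (Sum.inr i)) *
          (C (c j) * X (Sum.inl j) * X (Sum.inr j)
            - C (c i) * X (Sum.inl i) * X (Sum.inr i))
          : MvPolynomial (Fin n ⊕ Fin n) R))
      = ∏ i : Fin n, ∏ j ∈ Finset.Ioi i, (c j - c i) := by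
  classical
  have hw : (Fin.revPerm * Fin.revPerm : Equiv.Perm (Fin n)) = 1 := by
    refine Equiv.ext fun k => ?_
    simp [Equiv.Perm.mul_apply]
  simp only [Finset.prod_mul_distrib]
  rw [vandermonde_expand (fun i => (X (Sum.inl i) : MvPolynomial (Fin n ⊕ Fin n) R)),
    vandermonde_expand (fun i => (X (Sum.inr i) : MvPolynomial (Fin n ⊕ Fin n) R)),
    vandermonde_expand (fun i => (C (c i) * X (Sum.inl i) * X (Sum.inr i)
      : MvPolynomial (Fin n ⊕ Fin n) R))]
  simp only [Finset.sum_mul, Finset.mul_sum, smul_mul_assoc, mul_smul_comm]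
  rw [MvPolynomial.coeff_sum]
  simp only [MvPolynomial.coeff_sum, MvPolynomial.coeff_smul, term_eq, coeff_monomial,
    cond_iff]
  rw [vandermonde_expand c]
  refine Finset.sum_congr rfl fun τ _ => ?_
  simp only [ite_and]
  simp only [Finset.sum_ite_eq', Finset.mem_univ, if_true, smul_ite, smul_zero]
  rw [smul_smul, smul_smul, mul_assoc, Int.units_mul_self, mul_one]
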